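/- Let μ be a strong limit cardinal of cofinality ℵ₀, let G₁, G₂ ∈ K^spc_μ, let H be an ℵ₀-indecomposable locally finite group, and let f_ℓ be an embedding of H into G_ℓ for ℓ = 1,2. If there exist a locally finite group G of cardinality μ and embeddings g_ℓ of G_ℓ into G (ℓ = 1,2) with g₁ ∘ f₁ = g₂ ∘ f₂, then there is an isomorphism h from G₁ onto G₂ with h ∘ f₁ = f₂. -/

import Mathlib

universe u
open Cardinal

/-- A group is locally finite if every finitely generated subgroup is finite. -/
def LocallyFiniteGroup (G : Type u) [Group G] : Prop :=
  ∀ s : Finset G, Set.Finite ((Subgroup.closure (s : Set G) : Subgroup G) : Set G)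

/-- A group `G` is `θ`-indecomposable when every `⊆`-increasing sequence
`⟨M_i : i < θ⟩` of subgroups of `G` with union `G` contains `G` as a member. -/
def GroupIndecomp (θ : Cardinal.{u}) (G : Type u) [Group G] : Prop :=
  ∀ M : θ.ord.ToType → Subgroup G, Monotone M → (⨆ i, M i) = ⊤ → ∃ i, M i = ⊤

/-- `G` is a universal locally finite group of cardinality `μ`. -/
def UniversalLF (μ : Cardinal.{u}) (G : Type u) [Group G] : Prop :=
  LocallyFiniteGroup G ∧ #G = μ ∧
    ∀ (H : Type u) (_ : Group H), LocallyFiniteGroup H → #H = μ →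
      ∃ f : H →* G, Function.Injective f

/-- The pair `(G, H)` (with `H` embedded in `G` via `e`) is a universal
`(μ, <μ)`-amalgamation base: every locally finite group `G'` of cardinality `μ`
containing `G` embeds into `G` over `H`. -/
def UnivAmalgBase (μ : Cardinal.{u}) (H G : Type u) [Group H] [Group G] (e : H →* G) : Prop :=
  ∀ (G' : Type u) (_ : Group G'), LocallyFiniteGroup G' → #G' = μ →
    ∀ g : G →* G', Function.Injective g →
      ∃ f : G' →* G, Function.Injective f ∧ f.comp (g.comp e) = e

/-- `G` belongs to the class `K^spc_μ`. -/
def KSpc (μ : Cardinal.{u}) (G : Type u) [Group G] : Prop :=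
  LocallyFiniteGroup G ∧ #G = μ ∧
  -- (b) every small subgroup is covered by an increasing ω-chain of ℵ₀-indecomposable
  -- subgroups with small union, and G itself is such a union
  ((∀ H : Subgroup G, #H < μ →
      ∃ Hn : ℕ → Subgroup G, Monotone Hn ∧ (∀ n, GroupIndecomp ℵ₀ ↥(Hn n)) ∧
        #(↥(⨆ n, Hn n)) < μ ∧ H ≤ ⨆ n, Hn n) ∧
    (∃ Gn : ℕ → Subgroup G, Monotone Gn ∧
      (∀ n, GroupIndecomp ℵ₀ ↥(Gn n) ∧ #(Gn n) < μ) ∧ (⨆ n, Gn n) = ⊤)) ∧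
  -- (c) for every ℵ₀-indecomposable small subgroup H, (G,H) is a universal
  -- (μ,<μ)-amalgamation base
  (∀ H : Subgroup G, #H < μ → GroupIndecomp ℵ₀ ↥H →
    UnivAmalgBase μ (↥H) G H.subtype) ∧
  -- (d) compatible ℵ₀-indecomposable small extensions of small ℵ₀-indecomposable
  -- subgroups embed over them
  (∀ H : Subgroup G, #H < μ → GroupIndecomp ℵ₀ ↥H →
    ∀ (H' : Type u) (_ : Group H'), LocallyFiniteGroup H' → #H' < μ → GroupIndecomp ℵ₀ H' →
      ∀ eH : ↥H →* H', Function.Injective eH →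
        (∃ (Gp : Type u) (_ : Group Gp), LocallyFiniteGroup Gp ∧ #Gp ≤ μ ∧
          ∃ (φ : G →* Gp) (ψ : H' →* Gp), Function.Injective φ ∧ Function.Injective ψ ∧
            ∀ x : ↥H, φ (x : G) = ψ (eH x)) →
        ∃ f : H' →* G, Function.Injective f ∧ ∀ x : ↥H, f (eH x) = (x : G))

section Aux

/-- ℕ-indexed version of `ℵ₀`-indecomposability. -/
lemma groupIndecomp_nat {G : Type u} [Group G] (h : GroupIndecomp ℵ₀ G)
    (M : ℕ → Subgroup G) (hM : Monotone M) (ht : (⨆ n, M n) = ⊤) :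
    ∃ n, M n = ⊤ := by
  haveI : IsWellOrder (ℵ₀ : Cardinal.{u}).ord.ToType (· < ·) := isWellOrder_lt
  have h1 : Ordinal.type (ULift.down.{u,0} ⁻¹'o ((· < ·) : ℕ → ℕ → Prop)) =
      Ordinal.type ((· < ·) : (ℵ₀ : Cardinal.{u}).ord.ToType →
        (ℵ₀ : Cardinal.{u}).ord.ToType → Prop) := by
    rw [Ordinal.type_uLift, Ordinal.type_nat_lt, Ordinal.type_toType, Cardinal.ord_aleph0,
      Ordinal.lift_omega0]
  obtain ⟨e⟩ := Ordinal.type_eq.mp h1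
  set c : (ℵ₀ : Cardinal.{u}).ord.ToType → ℕ := fun i => (e.symm i).down with hc
  have hmono : ∀ {i j}, i ≤ j → c i ≤ c j := by
    intro i j hij
    by_contra hlt
    push_neg at hlt
    have h2 : (ULift.down.{u,0} ⁻¹'o ((· < ·) : ℕ → ℕ → Prop)) (e.symm j) (e.symm i) := hlt
    have := e.symm.map_rel_iff.mp h2
    exact absurd this (not_lt.mpr hij)
  have hsurj : Function.Surjective c := by
    intro n
    exact ⟨e ⟨n⟩, by simp [hc]⟩
  obtain ⟨i, hi⟩ := h (fun i => M (c i)) (fun i j hij => hM (hmono hij))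
    (by rw [hsurj.iSup_comp (g := M)]; exact ht)
  exact ⟨c i, hi⟩

/-- Indecomposability transfers along group isomorphisms. -/
lemma groupIndecomp_congr {G H : Type u} [Group G] [Group H] (e : G ≃* H)
    (h : GroupIndecomp ℵ₀ G) : GroupIndecomp ℵ₀ H := by
  intro M hM htop
  obtain ⟨i, hi⟩ := h (fun i => (M i).map e.symm.toMonoidHom)
    (fun a b hab => Subgroup.map_mono (hM hab))
    (by rw [← Subgroup.map_iSup, htop, Subgroup.map_top_of_surjective _ e.symm.surjective])
  refine ⟨i, Subgroup.map_injective (f := e.symm.toMonoidHom) e.symm.injective ?_⟩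
  rw [hi, Subgroup.map_top_of_surjective _ e.symm.surjective]

/-- An `ℵ₀`-indecomposable subgroup below the union of an increasing chain is below
some member of the chain. -/
lemma groupIndecomp_le_of_le_iSup {G : Type u} [Group G] {S : Subgroup G}
    (hS : GroupIndecomp ℵ₀ ↥S) (K : ℕ → Subgroup G) (hK : Monotone K)
    (hle : S ≤ ⨆ n, K n) : ∃ n, S ≤ K n := by
  have hsup : (⨆ n, (K n).comap S.subtype) = ⊤ := by
    rw [eq_top_iff]
    intro x _
    have hx : (x : G) ∈ ⨆ n, K n := hle x.2
    rw [Subgroup.mem_iSup_of_directed hK.directed_le] at hx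
    obtain ⟨n, hn⟩ := hx
    exact le_iSup (fun n => (K n).comap S.subtype) n (Subgroup.mem_comap.mpr hn)
  obtain ⟨n, hn⟩ := groupIndecomp_nat hS (fun n => (K n).comap S.subtype)
    (fun a b hab => Subgroup.comap_mono (hK hab)) hsup
  refine ⟨n, fun g hg => ?_⟩
  have : (⟨g, hg⟩ : S) ∈ (K n).comap S.subtype := hn ▸ Subgroup.mem_top _
  exact this

/-- In a locally finite group, the closure of a set of cardinality `< μ` (for `μ`
infinite) has cardinality `< μ`. -/
lemma mk_closure_lt {G : Type u} [Group G] (hLF : LocallyFiniteGroup G)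
    {μ : Cardinal.{u}} (hμ : ℵ₀ ≤ μ) {s : Set G} (hs : #s < μ) :
    #(Subgroup.closure s) < μ := by
  classical
  rcases lt_or_ge (#s) ℵ₀ with hfin | hinf
  · have hsf : s.Finite := Cardinal.lt_aleph0_iff_set_finite.mp hfin
    have : Set.Finite ((Subgroup.closure s : Subgroup G) : Set G) := by
      have := hLF hsf.toFinset
      rwa [Set.Finite.coe_toFinset] at this
    exact lt_of_lt_of_le this.lt_aleph0 hμ
  · have hinf' : Infinite s := Cardinal.aleph0_le_mk_iff.mp hinf
    set F : Finset s → Subgroup G :=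
      (fun t => Subgroup.closure (Subtype.val '' (↑t : Set s))) with hF
    have hcover : ∀ x ∈ Subgroup.closure s, ∃ t : Finset s, x ∈ F t := by
      intro x hx
      induction hx using Subgroup.closure_induction with
      | mem x hx => exact ⟨{⟨x, hx⟩}, Subgroup.subset_closure (by simp [hF])⟩
      | one => exact ⟨∅, Subgroup.one_mem _⟩
      | mul x y hx hy ihx ihy =>
          obtain ⟨t₁, ht1⟩ := ihx
          obtain ⟨t₂, ht2⟩ := ihy
          refine ⟨t₁ ∪ t₂, Subgroup.mul_mem _ ?_ ?_⟩
          · exact Subgroup.closure_mono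
              (Set.image_mono (Finset.coe_subset.mpr Finset.subset_union_left)) ht1
          · exact Subgroup.closure_mono
              (Set.image_mono (Finset.coe_subset.mpr Finset.subset_union_right)) ht2
      | inv x hx ihx =>
          obtain ⟨t, ht⟩ := ihx
          exact ⟨t, Subgroup.inv_mem _ ht⟩
    have hsub : ∀ t : Finset s, F t ≤ Subgroup.closure s :=
      fun t => Subgroup.closure_mono (by rintro _ ⟨a, -, rfl⟩; exact a.2)
    have hsurj : Function.Surjective
        (fun p : Σ t : Finset s, ↥(F t) =>
          (⟨(p.2 : G), hsub p.1 p.2.2⟩ : ↥(Subgroup.closure s))) := by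
      rintro ⟨x, hx⟩
      obtain ⟨t, ht⟩ := hcover x hx
      exact ⟨⟨t, ⟨x, ht⟩⟩, rfl⟩
    have h2 : ∀ t : Finset s, #(↥(F t)) ≤ ℵ₀ := by
      intro t
      have hfin : Set.Finite ((F t : Subgroup G) : Set G) := by
        have := hLF (t.image Subtype.val)
        rwa [Finset.coe_image] at this
      exact le_of_lt (lt_of_lt_of_le hfin.lt_aleph0 le_rfl)
    calc #(Subgroup.closure s)
        ≤ #(Σ t : Finset s, ↥(F t)) := Cardinal.mk_le_of_surjective hsurj
      _ = Cardinal.sum (fun t : Finset s => #(↥(F t))) := Cardinal.mk_sigma _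
      _ ≤ Cardinal.sum (fun _ : Finset s => ℵ₀) := Cardinal.sum_le_sum _ _ h2
      _ = #(Finset s) * ℵ₀ := Cardinal.sum_const' _ _
      _ = #s * ℵ₀ := by rw [Cardinal.mk_finset_of_infinite]
      _ = #s := by rw [Cardinal.mul_eq_max hinf le_rfl, max_eq_left hinf]
      _ < μ := hs

lemma mk_sup_lt {G : Type u} [Group G] (hLF : LocallyFiniteGroup G)
    {μ : Cardinal.{u}} (hμ : ℵ₀ ≤ μ) {P Q : Subgroup G}
    (hP : #P < μ) (hQ : #Q < μ) : #↥(P ⊔ Q) < μ := by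
  have h : (P ⊔ Q) = Subgroup.closure ((P : Set G) ∪ (Q : Set G)) := by
    rw [Subgroup.closure_union, Subgroup.closure_eq, Subgroup.closure_eq]
  rw [h]
  refine mk_closure_lt hLF hμ (lt_of_le_of_lt (Cardinal.mk_union_le _ _) ?_)
  exact Cardinal.add_lt_of_lt hμ hP hQ

lemma exists_indec_above {G : Type u} [Group G] {μ : Cardinal.{u}} (hμ : ℵ₀ ≤ μ)
    (hLF : LocallyFiniteGroup G)
    (hb : ∀ H : Subgroup G, #H < μ →
      ∃ Hn : ℕ → Subgroup G, Monotone Hn ∧ (∀ n, GroupIndecomp ℵ₀ ↥(Hn n)) ∧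
        #(↥(⨆ n, Hn n)) < μ ∧ H ≤ ⨆ n, Hn n)
    {P Q : Subgroup G} (hP : #P < μ) (hPi : GroupIndecomp ℵ₀ ↥P)
    (hQ : #Q < μ) (hQi : GroupIndecomp ℵ₀ ↥Q) :
    ∃ A : Subgroup G, #A < μ ∧ GroupIndecomp ℵ₀ ↥A ∧ P ≤ A ∧ Q ≤ A := by
  obtain ⟨Hn, hmono, hind, hsmall, hle⟩ := hb (P ⊔ Q) (mk_sup_lt hLF hμ hP hQ)
  obtain ⟨n₁, h1⟩ := groupIndecomp_le_of_le_iSup hPi Hn hmono (le_trans le_sup_left hle)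
  obtain ⟨n₂, h2⟩ := groupIndecomp_le_of_le_iSup hQi Hn hmono (le_trans le_sup_right hle)
  refine ⟨Hn (max n₁ n₂), ?_, hind _, h1.trans (hmono (le_max_left _ _)),
    h2.trans (hmono (le_max_right _ _))⟩
  refine lt_of_le_of_lt ?_ hsmall
  exact Cardinal.mk_le_mk_of_subset (SetLike.coe_subset_coe.mpr (le_iSup Hn (max n₁ n₂)))

lemma exists_seq_rel {α : Type*} (R : ℕ → α → α → Prop) (a0 : α)
    (h : ∀ n a, ∃ b, R n a b) :
    ∃ f : ℕ → α, f 0 = a0 ∧ ∀ n, R n (f n) (f (n + 1)) := by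
  choose g hg using h
  exact ⟨fun n => Nat.rec a0 g n, rfl, fun n => hg n _⟩

/-- The states of the back-and-forth construction. -/
def KState (μ : Cardinal.{u}) (G₁ G₂ : Type u) [Group G₁] [Group G₂] : Type u :=
  {p : Subgroup G₁ × (G₁ →* G₂) //
    #↥p.1 < μ ∧ GroupIndecomp ℵ₀ ↥p.1 ∧ Function.Injective p.2}

/-- The step relation of the back-and-forth construction. -/
def KRel {μ : Cardinal.{u}} {G₁ G₂ : Type u} [Group G₁] [Group G₂]
    (C₁ : ℕ → Subgroup G₁) (C₂ : ℕ → Subgroup G₂) (n : ℕ)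
    (p q : KState μ G₁ G₂) : Prop :=
  C₁ (n + 1) ≤ q.1.1 ∧ p.1.1 ≤ q.1.1 ∧ (∀ x ∈ p.1.1, q.1.2 x = p.1.2 x) ∧
    ∃ B : Subgroup G₂, ∃ v : G₂ →* G₁,
      C₂ n ≤ B ∧ (∀ b ∈ B, q.1.2 (v b) = b) ∧ B.map v ≤ q.1.1

/-- homogeneity of special models, `(∗)₅(b)`. -/
theorem KSpc_homogeneous (μ : Cardinal.{u})
    (hsl : μ.IsStrongLimit) (hcof : μ.ord.cof = ℵ₀)
    (G₁ G₂ : Type u) [Group G₁] [Group G₂]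
    (h₁ : KSpc μ G₁) (h₂ : KSpc μ G₂)
    (H : Type u) [Group H] (hH : LocallyFiniteGroup H) (hHind : GroupIndecomp ℵ₀ H)
    (f₁ : H →* G₁) (f₂ : H →* G₂)
    (hf₁ : Function.Injective f₁) (hf₂ : Function.Injective f₂)
    (hcompat : ∃ (G : Type u) (_ : Group G), LocallyFiniteGroup G ∧ #G = μ ∧
      ∃ (g₁ : G₁ →* G) (g₂ : G₂ →* G), Function.Injective g₁ ∧ Function.Injective g₂ ∧
        g₁.comp f₁ = g₂.comp f₂) :
    ∃ h : G₁ ≃* G₂, ∀ x : H, h (f₁ x) = f₂ x := by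
  classical
  obtain ⟨G, instG, hGlf, hGcard, g₁, g₂, hg₁, hg₂, hcomm⟩ := hcompat
  obtain ⟨h₁lf, h₁card, ⟨h₁b, C₁, hC₁mono, hC₁prop, hC₁top⟩, h₁c, -⟩ := h₁
  obtain ⟨h₂lf, h₂card, ⟨h₂b, C₂, hC₂mono, hC₂prop, hC₂top⟩, h₂c, -⟩ := h₂
  have hμ : ℵ₀ ≤ μ := hsl.aleph0_le
  -- the ranges of `f₁` and `f₂` are small indecomposable subgroups
  have hR₁indec : GroupIndecomp ℵ₀ ↥f₁.range :=
    groupIndecomp_congr (MonoidHom.ofInjective hf₁) hHind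
  have hR₂indec : GroupIndecomp ℵ₀ ↥f₂.range :=
    groupIndecomp_congr (MonoidHom.ofInjective hf₂) hHind
  have hR₁small : #↥f₁.range < μ := by
    obtain ⟨n, hn⟩ := groupIndecomp_le_of_le_iSup hR₁indec C₁ hC₁mono
      (by rw [hC₁top]; exact le_top)
    exact lt_of_le_of_lt (Cardinal.mk_le_mk_of_subset (SetLike.coe_subset_coe.mpr hn))
      (hC₁prop n).2
  have hR₂small : #↥f₂.range < μ := by
    obtain ⟨n, hn⟩ := groupIndecomp_le_of_le_iSup hR₂indec C₂ hC₂mono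
      (by rw [hC₂top]; exact le_top)
    exact lt_of_le_of_lt (Cardinal.mk_le_mk_of_subset (SetLike.coe_subset_coe.mpr hn))
      (hC₂prop n).2
  -- the initial embedding `u₀ : G₁ →* G₂` over `H`
  obtain ⟨π, hπinj, hπeq⟩ := h₂c f₂.range hR₂small hR₂indec G instG hGlf hGcard g₂ hg₂
  set u₀ : G₁ →* G₂ := π.comp g₁ with hu₀def
  have hu₀inj : Function.Injective u₀ := hπinj.comp hg₁
  have hu₀ : ∀ x : H, u₀ (f₁ x) = f₂ x := by
    intro x
    have h1 : g₁ (f₁ x) = g₂ (f₂ x) := DFunLike.congr_fun hcomm x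
    have h2 : π (g₂ (f₂ x)) = f₂ x := by
      have := DFunLike.congr_fun hπeq (⟨f₂ x, ⟨x, rfl⟩⟩ : f₂.range)
      simpa using this
    rw [hu₀def, MonoidHom.comp_apply, h1, h2]
  obtain ⟨A₀, hA₀small, hA₀indec, hRA₀, hCA₀⟩ :=
    exists_indec_above hμ h₁lf h₁b hR₁small hR₁indec (hC₁prop 0).2 (hC₁prop 0).1
  -- the one-step improvement of the back-and-forth construction
  have step : ∀ (n : ℕ) (p : KState μ G₁ G₂), ∃ q, KRel C₁ C₂ n p q := by
    rintro n ⟨⟨A, uu⟩, hAsmall, hAindec, huinj⟩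
    have hmapeq : #↥(A.map uu) = #↥A :=
      (Cardinal.mk_congr (Subgroup.equivMapOfInjective A uu huinj).toEquiv).symm
    have hmapsmall : #↥(A.map uu) < μ := by rw [hmapeq]; exact hAsmall
    have hmapindec : GroupIndecomp ℵ₀ ↥(A.map uu) :=
      groupIndecomp_congr (Subgroup.equivMapOfInjective A uu huinj) hAindec
    obtain ⟨B, hBsmall, hBindec, hAB, hCB⟩ :=
      exists_indec_above hμ h₂lf h₂b hmapsmall hmapindec (hC₂prop n).2 (hC₂prop n).1
    obtain ⟨v, hvinj, hveq⟩ := h₁c A hAsmall hAindec G₂ inferInstance h₂lf h₂card uu huinj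
    obtain ⟨u', hu'inj, hu'eq⟩ := h₂c B hBsmall hBindec G₁ inferInstance h₁lf h₁card v hvinj
    have hvu : ∀ x ∈ A, v (uu x) = x := by
      intro x hx
      have := DFunLike.congr_fun hveq (⟨x, hx⟩ : A)
      simpa using this
    have hu'v : ∀ b ∈ B, u' (v b) = b := by
      intro b hb
      have := DFunLike.congr_fun hu'eq (⟨b, hb⟩ : B)
      simpa using this
    have hBveq : #↥(B.map v) = #↥B :=
      (Cardinal.mk_congr (Subgroup.equivMapOfInjective B v hvinj).toEquiv).symm
    have hBvsmall : #↥(B.map v) < μ := by rw [hBveq]; exact hBsmall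
    have hBvindec : GroupIndecomp ℵ₀ ↥(B.map v) :=
      groupIndecomp_congr (Subgroup.equivMapOfInjective B v hvinj) hBindec
    obtain ⟨A', hA'small, hA'indec, hBvA', hCA'⟩ :=
      exists_indec_above hμ h₁lf h₁b hBvsmall hBvindec (hC₁prop (n + 1)).2 (hC₁prop (n + 1)).1
    refine ⟨⟨⟨A', u'⟩, hA'small, hA'indec, hu'inj⟩, hCA', ?_, ?_, B, v, hCB, hu'v, hBvA'⟩
    · intro x hx
      exact hBvA' (Subgroup.mem_map.mpr
        ⟨uu x, hAB (Subgroup.mem_map_of_mem uu hx), hvu x hx⟩)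
    · intro x hx
      have hux : uu x ∈ B := hAB (Subgroup.mem_map_of_mem uu hx)
      calc u' x = u' (v (uu x)) := by rw [hvu x hx]
        _ = uu x := hu'v _ hux
  obtain ⟨st, hst0, hstep⟩ := exists_seq_rel (KRel C₁ C₂)
    (⟨⟨A₀, u₀⟩, hA₀small, hA₀indec, hu₀inj⟩ : KState μ G₁ G₂) step
  have hA0 : (st 0).1.1 = A₀ := by rw [hst0]
  have hu0 : (st 0).1.2 = u₀ := by rw [hst0]
  have hAmono : Monotone (fun n => (st n).1.1) :=
    monotone_nat_of_le_succ (fun n => (hstep n).2.1)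
  have hCle : ∀ n, C₁ n ≤ (st n).1.1 := by
    intro n
    cases n with
    | zero => rw [hA0]; exact hCA₀
    | succ m => exact (hstep m).1
  have agree : ∀ n m, n ≤ m → ∀ x ∈ (st n).1.1, (st m).1.2 x = (st n).1.2 x := by
    intro n m hnm
    induction m, hnm using Nat.le_induction with
    | base => intro x _; rfl
    | succ m hm ih =>
        intro x hx
        have hx' : x ∈ (st m).1.1 := hAmono hm hx
        rw [(hstep m).2.2.1 x hx', ih x hx]
  have hsupA : (⨆ n, (st n).1.1) = ⊤ := by
    rw [eq_top_iff, ← hC₁top]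
    exact iSup_mono hCle
  have htotal : ∀ x : G₁, ∃ n, x ∈ (st n).1.1 := by
    intro x
    have hx : x ∈ ⨆ n, (st n).1.1 := by rw [hsupA]; exact Subgroup.mem_top x
    exact (Subgroup.mem_iSup_of_directed hAmono.directed_le).mp hx
  choose idx hidx using htotal
  have key : ∀ (x : G₁) (n : ℕ), x ∈ (st n).1.1 → (st (idx x)).1.2 x = (st n).1.2 x := by
    intro x n hx
    rcases le_total (idx x) n with h | h
    · exact (agree (idx x) n h x (hidx x)).symm
    · exact agree n (idx x) h x hx
  set φ : G₁ →* G₂ :=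
    { toFun := fun x => (st (idx x)).1.2 x
      map_one' := map_one _
      map_mul' := by
        intro x y
        show (st (idx (x * y))).1.2 (x * y) = (st (idx x)).1.2 x * (st (idx y)).1.2 y
        have hx : x ∈ (st (max (idx x) (max (idx y) (idx (x * y))))).1.1 :=
          hAmono (le_max_left _ _) (hidx x)
        have hy : y ∈ (st (max (idx x) (max (idx y) (idx (x * y))))).1.1 :=
          hAmono (le_trans (le_max_left _ _) (le_max_right _ _)) (hidx y)
        have hxy : x * y ∈ (st (max (idx x) (max (idx y) (idx (x * y))))).1.1 :=
          hAmono (le_trans (le_max_right _ _) (le_max_right _ _)) (hidx (x * y))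
        rw [key (x * y) _ hxy, key x _ hx, key y _ hy, map_mul] } with hφdef
  have hφapp : ∀ x, φ x = (st (idx x)).1.2 x := fun x => rfl
  have hφinj : Function.Injective φ := by
    intro x y hxy
    rw [hφapp, hφapp] at hxy
    have hx : x ∈ (st (max (idx x) (idx y))).1.1 := hAmono (le_max_left _ _) (hidx x)
    have hy : y ∈ (st (max (idx x) (idx y))).1.1 := hAmono (le_max_right _ _) (hidx y)
    have h1 : (st (max (idx x) (idx y))).1.2 x = (st (max (idx x) (idx y))).1.2 y := by
      rw [← key x _ hx, ← key y _ hy]; exact hxy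
    exact (st (max (idx x) (idx y))).2.2.2 h1
  have hφsurj : Function.Surjective φ := by
    intro b
    have hb : b ∈ ⨆ n, C₂ n := by rw [hC₂top]; exact Subgroup.mem_top b
    obtain ⟨n, hbn⟩ := (Subgroup.mem_iSup_of_directed hC₂mono.directed_le).mp hb
    obtain ⟨B, v, hCB, hu'v, hBv⟩ := (hstep n).2.2.2
    have hbB : b ∈ B := hCB hbn
    have ha : v b ∈ (st (n + 1)).1.1 := hBv (Subgroup.mem_map_of_mem v hbB)
    refine ⟨v b, ?_⟩
    rw [hφapp, key (v b) (n + 1) ha]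
    exact hu'v b hbB
  refine ⟨MulEquiv.ofBijective φ ⟨hφinj, hφsurj⟩, ?_⟩
  intro x
  have hx0 : f₁ x ∈ (st 0).1.1 := by rw [hA0]; exact hRA₀ ⟨x, rfl⟩
  have hofb : MulEquiv.ofBijective φ ⟨hφinj, hφsurj⟩ (f₁ x) = φ (f₁ x) := rfl
  rw [hofb, hφapp, key (f₁ x) 0 hx0, hu0]
  exact hu₀ x

end Aux
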